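/- Let Y be a cocomplete 𝒯-category. Then composition with the Yoneda functor y_X: X → X̂ defines an equivalence of ordered sets from the left adjoint 𝒯-functors X̂ → Y to the 𝒯-functors X → Y: for every 𝒯-functor f: X → Y there is a left adjoint 𝒯-functor f_L: X̂ → Y, unique up to equivalence, with f_L · y_X ≅ f; its right adjoint is ⟨f_*⟩: Y → X̂; and f ≤ f' implies f_L ≤ f'_L. -/

import Mathlib

universe u

namespace Paper

/-- A strict topological theory `𝒯 = (𝕋, V, ξ)`: a commutative unital quantale `V`
(a complete lattice with a commutative monoid structure whose multiplication preserves
suprema in each variable, with `⊥ < k`), a `Set`-monad `𝕋 = (T, e, m)` such that `T`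
sends pullbacks to weak pullbacks and the naturality squares of `m` are weak pullbacks,
and a `𝕋`-algebra structure `ξ : T V → V` for which `⊗` and `k` are `𝕋`-algebra
homomorphisms and `ξ_X := ξ ∘ T(-)` is a (monotone) natural transformation
`P_V → P_V T`. -/
structure TopTheory (V : Type u) [CompleteLattice V] (T : Type u → Type u) where
  tens : V → V → V
  unit : V
  tens_comm : ∀ u v : V, tens u v = tens v u
  tens_assoc : ∀ u v w : V, tens (tens u v) w = tens u (tens v w)
  unit_tens : ∀ v : V, tens unit v = v
  tens_sSup : ∀ (u : V) (S : Set V), tens u (sSup S) = ⨆ v ∈ S, tens u v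
  bot_lt_unit : (⊥ : V) < unit
  map : ∀ {X Y : Type u}, (X → Y) → T X → T Y
  map_id : ∀ {X : Type u}, map (id : X → X) = id
  map_comp : ∀ {X Y Z : Type u} (g : Y → Z) (f : X → Y) (𝔵 : T X),
    map (g ∘ f) 𝔵 = map g (map f 𝔵)
  e : ∀ {X : Type u}, X → T X
  m : ∀ {X : Type u}, T (T X) → T X
  e_nat : ∀ {X Y : Type u} (f : X → Y) (x : X), map f (e x) = e (f x)
  m_nat : ∀ {X Y : Type u} (f : X → Y) (𝔛 : T (T X)), map f (m 𝔛) = m (map (map f) 𝔛)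
  m_e : ∀ {X : Type u} (𝔵 : T X), m (e 𝔵) = 𝔵
  m_map_e : ∀ {X : Type u} (𝔵 : T X), m (map e 𝔵) = 𝔵
  m_assoc : ∀ {X : Type u} (𝔜 : T (T (T X))), m (m 𝔜) = m (map m 𝔜)
  /-- (BC): `T` sends pullbacks to weak pullbacks. -/
  map_bc : ∀ {X Y Z : Type u} (f : X → Z) (g : Y → Z) (𝔵 : T X) (𝔶 : T Y),
    map f 𝔵 = map g 𝔶 →
    ∃ 𝔴 : T {p : X × Y // f p.1 = g p.2},
      map (fun p => p.1.1) 𝔴 = 𝔵 ∧ map (fun p => p.1.2) 𝔴 = 𝔶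
  /-- (BC): every naturality square of `m` is a weak pullback. -/
  m_bc : ∀ {X Y : Type u} (f : X → Y) (𝔜 : T (T Y)) (𝔵 : T X),
    m 𝔜 = map f 𝔵 → ∃ 𝔛 : T (T X), map (map f) 𝔛 = 𝔜 ∧ m 𝔛 = 𝔵
  xi : T V → V
  xi_e : ∀ v : V, xi (e v) = v
  xi_m : ∀ 𝔙 : T (T V), xi (m 𝔙) = xi (map xi 𝔙)
  /-- `k : 1 → V` is a `𝕋`-algebra homomorphism. -/
  xi_unit : ∀ {X : Type u} (𝔵 : T X), xi (map (fun _ => unit) 𝔵) = unit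
  /-- `⊗ : V × V → V` is a `𝕋`-algebra homomorphism. -/
  xi_tens : ∀ 𝔴 : T (V × V),
    xi (map (fun p => tens p.1 p.2) 𝔴) = tens (xi (map Prod.fst 𝔴)) (xi (map Prod.snd 𝔴))
  /-- each component `ξ_X : V^X → V^{T X}` is monotone. -/
  xi_mono : ∀ {X : Type u} (φ φ' : X → V), (∀ x, φ x ≤ φ' x) →
    ∀ 𝔵 : T X, xi (map φ 𝔵) ≤ xi (map φ' 𝔵)
  /-- `ξ_X` is a natural transformation `P_V → P_V T`. -/
  xi_nat : ∀ {X Y : Type u} (f : X → Y) (φ : X → V) (𝔶 : T Y),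
    (⨆ 𝔵 : {𝔵 : T X // map f 𝔵 = 𝔶}, xi (map φ 𝔵.1)) =
      xi (map (fun y => ⨆ x : {x : X // f x = y}, φ x.1) 𝔶)

namespace TopTheory

variable {V : Type u} [CompleteLattice V] {T : Type u → Type u}

/-- The internal hom of the quantale: `u ⊗ (-) ⊣ hom (u, -)`. -/
def ihom (𝒯 : TopTheory V T) (u w : V) : V := sSup {z | 𝒯.tens u z ≤ w}

/-- The extension `T_ξ` of `T : Set → Set` to `V`-relations. -/
def Txi (𝒯 : TopTheory V T) {X Y : Type u} (r : X → Y → V) (𝔵 : T X) (𝔶 : T Y) : V :=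
  ⨆ 𝔴 : {w : T (X × Y) // 𝒯.map Prod.fst w = 𝔵 ∧ 𝒯.map Prod.snd w = 𝔶},
    𝒯.xi (𝒯.map (fun p => r p.1 p.2) 𝔴.1)

/-- Kleisli convolution `β ∘ α = β · T_ξ α · m_X°` of `𝒯`-relations
`α : X ⇸ Y` and `β : Y ⇸ Z`. -/
def kleisli (𝒯 : TopTheory V T) {X Y Z : Type u}
    (β : T Y → Z → V) (α : T X → Y → V) (𝔵 : T X) (z : Z) : V :=
  ⨆ 𝔛 : {𝔛 : T (T X) // 𝒯.m 𝔛 = 𝔵}, ⨆ 𝔶 : T Y, 𝒯.tens (𝒯.Txi α 𝔛.1 𝔶) (β 𝔶 z)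

/-- The `𝒯`-relation `e_X° : X ⇸ X`. -/
def unitRel (𝒯 : TopTheory V T) (X : Type u) (𝔵 : T X) (x : X) : V :=
  ⨆ _ : 𝔵 = 𝒯.e x, 𝒯.unit

/-- A `𝒯`-category structure on `X`: a `𝒯`-relation `a : X ⇸ X` with
`e_X° ≤ a` and `a ∘ a ≤ a`. -/
structure TCatStr (𝒯 : TopTheory V T) (X : Type u) where
  rel : T X → X → V
  le_refl : ∀ x : X, 𝒯.unit ≤ rel (𝒯.e x) x
  comp : ∀ (𝔵 : T X) (x : X), 𝒯.kleisli rel rel 𝔵 x ≤ rel 𝔵 x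

/-- The `𝒯`-module conditions `φ ∘ a ≤ φ` and `b ∘ φ ≤ φ` for a `𝒯`-relation
`φ : X ⇸ Y` between (structures underlying) `𝒯`-categories `(X,a)` and `(Y,b)`. -/
def IsTModRel (𝒯 : TopTheory V T) {X Y : Type u}
    (a : T X → X → V) (b : T Y → Y → V) (φ : T X → Y → V) : Prop :=
  (∀ 𝔵 y, 𝒯.kleisli φ a 𝔵 y ≤ φ 𝔵 y) ∧ (∀ 𝔵 y, 𝒯.kleisli b φ 𝔵 y ≤ φ 𝔵 y)

variable {𝒯 : TopTheory V T}

/-- `f_* = b · T f`. -/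
def modStar {X Y : Type u} (b : 𝒯.TCatStr Y) (f : X → Y) (𝔵 : T X) (y : Y) : V :=
  b.rel (𝒯.map f 𝔵) y

/-- `f^* = f° · b`. -/
def modCostar {X Y : Type u} (b : 𝒯.TCatStr Y) (f : X → Y) (𝔶 : T Y) (x : X) : V :=
  b.rel 𝔶 (f x)

/-- The extension `φ ⟜ ψ` of `φ : X ⇸∘ Y` along `ψ : X ⇸∘ Z`, given by
`(φ ⟜ ψ)(𝔷,y) = ⋀_{𝔵 ∈ T X} hom((T_ξ ψ · m_X°)(𝔵,𝔷), φ(𝔵,y))`. -/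
def extend (𝒯 : TopTheory V T) {X Y Z : Type u}
    (φ : T X → Y → V) (ψ : T X → Z → V) (𝔷 : T Z) (y : Y) : V :=
  ⨅ 𝔵 : T X, 𝒯.ihom (⨆ 𝔛 : {𝔛 : T (T X) // 𝒯.m 𝔛 = 𝔵}, 𝒯.Txi ψ 𝔛.1 𝔷) (φ 𝔵 y)

/-- A `𝒯`-functor `f : (X,a) → (Y,b)`. -/
def IsTFunctor {X Y : Type u} (a : 𝒯.TCatStr X) (b : 𝒯.TCatStr Y) (f : X → Y) : Prop :=
  ∀ (𝔵 : T X) (x : X), a.rel 𝔵 x ≤ b.rel (𝒯.map f 𝔵) (f x)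

/-- A fully faithful `𝒯`-functor. -/
def FullyFaithful {X Y : Type u} (a : 𝒯.TCatStr X) (b : 𝒯.TCatStr Y) (f : X → Y) : Prop :=
  ∀ (𝔵 : T X) (x : X), a.rel 𝔵 x = b.rel (𝒯.map f 𝔵) (f x)

/-- The order `f ≤ g ⟺ f^* ≤ g^*` on `𝒯`-functors `X → (Y,b)`. -/
def funLE {X Y : Type u} (b : 𝒯.TCatStr Y) (f g : X → Y) : Prop :=
  ∀ (𝔶 : T Y) (x : X), b.rel 𝔶 (f x) ≤ b.rel 𝔶 (g x)

/-- Equivalence `f ≅ g ⟺ f^* = g^*` of `𝒯`-functors `X → (Y,b)`. -/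
def FunEquiv {X Y : Type u} (b : 𝒯.TCatStr Y) (f g : X → Y) : Prop :=
  ∀ (𝔶 : T Y) (x : X), b.rel 𝔶 (f x) = b.rel 𝔶 (g x)

/-- `f ⊣ g`:  `1_X ≤ g·f` and `f·g ≤ 1_Y`. -/
def IsAdjunction {X Y : Type u} (a : 𝒯.TCatStr X) (b : 𝒯.TCatStr Y)
    (f : X → Y) (g : Y → X) : Prop :=
  (∀ (𝔵 : T X) (x : X), a.rel 𝔵 x ≤ a.rel 𝔵 (g (f x))) ∧
    (∀ (𝔶 : T Y) (y : Y), b.rel 𝔶 (f (g y)) ≤ b.rel 𝔶 y)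

/-- A left adjoint `𝒯`-functor. -/
def IsLeftAdjoint {X Y : Type u} (a : 𝒯.TCatStr X) (b : 𝒯.TCatStr Y) (f : X → Y) : Prop :=
  IsTFunctor a b f ∧ ∃ g : Y → X, IsTFunctor b a g ∧ IsAdjunction a b f g

/-- L-separatedness: equivalent `𝒯`-functors into `X` are equal. -/
def Separated {X : Type u} (a : 𝒯.TCatStr X) : Prop :=
  ∀ (A : Type u) (as : 𝒯.TCatStr A) (f g : A → X),
    IsTFunctor as a f → IsTFunctor as a g → FunEquiv a f g → f = g

/-- Injectivity with respect to fully faithful `𝒯`-functors. -/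
def Injective {X : Type u} (a : 𝒯.TCatStr X) : Prop :=
  ∀ (A B : Type u) (as : 𝒯.TCatStr A) (bs : 𝒯.TCatStr B) (f : A → X) (i : A → B),
    IsTFunctor as a f → IsTFunctor as bs i → FullyFaithful as bs i →
      ∃ g : B → X, IsTFunctor bs a g ∧ FunEquiv a (g ∘ i) f

/-- `g : Z → X` is the `ψ`-weighted colimit of `h : A → X`, i.e. `g_* = h_* ⟜ ψ`. -/
def IsColimit {X A Z : Type u} (a : 𝒯.TCatStr X) (h : A → X) (ψ : T A → Z → V)
    (g : Z → X) : Prop :=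
  ∀ (𝔷 : T Z) (x : X), modStar a g 𝔷 x = 𝒯.extend (modStar a h) ψ 𝔷 x

/-- Cocompleteness: every weighted diagram has a colimit. -/
def Cocomplete {X : Type u} (a : 𝒯.TCatStr X) : Prop :=
  ∀ (A Z : Type u) (as : 𝒯.TCatStr A) (cs : 𝒯.TCatStr Z) (h : A → X),
    IsTFunctor as a h → ∀ ψ : T A → Z → V, 𝒯.IsTModRel as.rel cs.rel ψ →
      ∃ g : Z → X, IsTFunctor cs a g ∧ IsColimit a h ψ g

/-- Cocontinuity: preservation of all weighted colimits. -/
def Cocontinuous {X Y : Type u} (a : 𝒯.TCatStr X) (b : 𝒯.TCatStr Y) (f : X → Y) : Prop :=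
  ∀ (A Z : Type u) (as : 𝒯.TCatStr A) (cs : 𝒯.TCatStr Z) (h : A → X)
    (ψ : T A → Z → V) (g : Z → X),
    IsTFunctor as a h → 𝒯.IsTModRel as.rel cs.rel ψ → IsTFunctor cs a g →
      IsColimit a h ψ g → IsColimit b (f ∘ h) ψ (f ∘ g)

/-- A presheaf on `(X,a)`: a `𝒯`-module `X ⇸∘ G`, where `G = (1, e_1°)`. -/
def IsPresheaf {X : Type u} (a : 𝒯.TCatStr X) (ψ : T X → V) : Prop :=
  𝒯.IsTModRel a.rel (𝒯.unitRel PUnit) (fun 𝔵 _ => ψ 𝔵)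

/-- The underlying set of the presheaf `𝒯`-category `X̂`. -/
def Hat {X : Type u} (a : 𝒯.TCatStr X) : Type u := {ψ : T X → V // IsPresheaf a ψ}

/-- The `𝒯`-category structure `⟦-,-⟧` of `V^{|X|}`. -/
def powRel (𝒯 : TopTheory V T) (X : Type u) (𝔭 : T (T X → V)) (ψ : T X → V) : V :=
  ⨅ 𝔮 : {q : T ((T X) × (T X → V)) // 𝒯.map Prod.snd q = 𝔭},
    𝒯.ihom (𝒯.xi (𝒯.map (fun p => p.2 p.1) 𝔮.1)) (ψ (𝒯.m (𝒯.map Prod.fst 𝔮.1)))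

/-- `hs` is the `𝒯`-category structure on `X̂` inherited from `V^{|X|}`. -/
def IsHatStr {X : Type u} (a : 𝒯.TCatStr X) (hs : 𝒯.TCatStr (Hat a)) : Prop :=
  ∀ (𝔭 : T (Hat a)) (ψ : Hat a), hs.rel 𝔭 ψ = 𝒯.powRel X (𝒯.map Subtype.val 𝔭) ψ.1

/-- `y` is the Yoneda functor `X → X̂`, `y x = a(-,x)`. -/
def IsYoneda {X : Type u} (a : 𝒯.TCatStr X) (y : X → Hat a) : Prop :=
  ∀ (x : X) (𝔵 : T X), (y x).1 𝔵 = a.rel 𝔵 x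

/-- The underlying map `ψ ↦ ψ ∘ f^*` of `f̂ : X̂ → Ŷ`. -/
def hatMapRel {X Y : Type u} (b : 𝒯.TCatStr Y) (f : X → Y) (ψ : T X → V) (𝔶 : T Y) : V :=
  𝒯.kleisli (fun 𝔵 (_ : PUnit.{u + 1}) => ψ 𝔵) (modCostar b f) 𝔶 PUnit.unit

/-- `fh` is the `𝒯`-functor `f̂ : X̂ → Ŷ`, with underlying map `ψ ↦ ψ ∘ f^*`. -/
def IsHatMap {X Y : Type u} (a : 𝒯.TCatStr X) (b : 𝒯.TCatStr Y) (f : X → Y)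
    (fh : Hat a → Hat b) : Prop :=
  ∀ (ψ : Hat a) (𝔶 : T Y), (fh ψ).1 𝔶 = hatMapRel b f ψ.1 𝔶

/-- An inhabited `𝒯`-module: `k ≤ ⋀_y ⋁_𝔵 φ(𝔵,y)`. -/
def InhabitedMod (𝒯 : TopTheory V T) {X Y : Type u} (φ : T X → Y → V) : Prop :=
  𝒯.unit ≤ ⨅ y : Y, ⨆ 𝔵 : T X, φ 𝔵 y

/-- A dense `𝒯`-functor: `f_*` is inhabited. -/
def Dense {X Y : Type u} (b : 𝒯.TCatStr Y) (f : X → Y) : Prop :=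
  𝒯.InhabitedMod (modStar b f)

/-- The underlying set of `X⁺ = {ψ ∈ X̂ ∣ ψ inhabited}`. -/
def Plus {X : Type u} (a : 𝒯.TCatStr X) : Type u :=
  {ψ : Hat a // 𝒯.InhabitedMod (fun 𝔵 (_ : PUnit.{u + 1}) => ψ.1 𝔵)}

/-- `ps` is the `𝒯`-category structure on `X⁺` inherited from `X̂`. -/
def IsPlusStr {X : Type u} (a : 𝒯.TCatStr X) (hs : 𝒯.TCatStr (Hat a))
    (ps : 𝒯.TCatStr (Plus a)) : Prop :=
  ∀ (𝔭 : T (Plus a)) (ψ : Plus a), ps.rel 𝔭 ψ = hs.rel (𝒯.map Subtype.val 𝔭) ψ.1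

/-- Inhabited-cocompleteness: all colimits with inhabited weights exist. -/
def ICocomplete {X : Type u} (a : 𝒯.TCatStr X) : Prop :=
  ∀ (A Z : Type u) (as : 𝒯.TCatStr A) (cs : 𝒯.TCatStr Z) (h : A → X),
    IsTFunctor as a h → ∀ ψ : T A → Z → V, 𝒯.IsTModRel as.rel cs.rel ψ →
      𝒯.InhabitedMod ψ → ∃ g : Z → X, IsTFunctor cs a g ∧ IsColimit a h ψ g

/-- Inhabited-cocontinuity: preservation of all colimits with inhabited weights. -/
def ICocontinuous {X Y : Type u} (a : 𝒯.TCatStr X) (b : 𝒯.TCatStr Y) (f : X → Y) : Prop :=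
  ∀ (A Z : Type u) (as : 𝒯.TCatStr A) (cs : 𝒯.TCatStr Z) (h : A → X)
    (ψ : T A → Z → V) (g : Z → X),
    IsTFunctor as a h → 𝒯.IsTModRel as.rel cs.rel ψ → 𝒯.InhabitedMod ψ →
      IsTFunctor cs a g → IsColimit a h ψ g → IsColimit b (f ∘ h) ψ (f ∘ g)


section Helpers

variable (𝒯)

lemma map_congr {X Y : Type u} {f g : X → Y} (h : ∀ x, f x = g x) (𝔵 : T X) :
    𝒯.map f 𝔵 = 𝒯.map g 𝔵 := by rw [show f = g from funext h]

lemma map_map {X Y Z : Type u} (g : Y → Z) (f : X → Y) (𝔵 : T X) :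
    𝒯.map g (𝒯.map f 𝔵) = 𝒯.map (fun x => g (f x)) 𝔵 := (𝒯.map_comp g f 𝔵).symm

lemma tens_mono_right {u z z' : V} (h : z ≤ z') : 𝒯.tens u z ≤ 𝒯.tens u z' := by
  have h1 := 𝒯.tens_sSup u (Set.Iic z')
  rw [csSup_Iic] at h1
  rw [h1]
  exact le_biSup _ h

lemma tens_mono_left {u u' z : V} (h : u ≤ u') : 𝒯.tens u z ≤ 𝒯.tens u' z := by
  rw [𝒯.tens_comm u z, 𝒯.tens_comm u' z]; exact 𝒯.tens_mono_right h

lemma le_ihom_iff {z u w : V} : z ≤ 𝒯.ihom u w ↔ 𝒯.tens u z ≤ w := by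
  constructor
  · intro h
    refine le_trans (𝒯.tens_mono_right h) ?_
    rw [ihom, 𝒯.tens_sSup]
    exact iSup₂_le fun v hv => hv
  · intro h
    exact le_sSup h

lemma tens_ihom_le {u w : V} : 𝒯.tens u (𝒯.ihom u w) ≤ w := (𝒯.le_ihom_iff).mp le_rfl

lemma ihom_mono {u w w' : V} (h : w ≤ w') : 𝒯.ihom u w ≤ 𝒯.ihom u w' :=
  sSup_le_sSup fun z hz => le_trans hz h

lemma ihom_anti {u u' w : V} (h : u ≤ u') : 𝒯.ihom u' w ≤ 𝒯.ihom u w :=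
  (𝒯.le_ihom_iff).mpr (le_trans (𝒯.tens_mono_left h) 𝒯.tens_ihom_le)

lemma ihom_unit (w : V) : 𝒯.ihom 𝒯.unit w = w := by
  apply le_antisymm
  · have h := 𝒯.tens_ihom_le (u := 𝒯.unit) (w := w)
    rwa [𝒯.unit_tens] at h
  · exact le_sSup (by simp only [Set.mem_setOf_eq, 𝒯.unit_tens, le_refl])

lemma tens_iSup {ι : Sort*} (u : V) (v : ι → V) :
    𝒯.tens u (⨆ i, v i) = ⨆ i, 𝒯.tens u (v i) := by
  rw [show (⨆ i, v i) = sSup (Set.range v) from rfl, 𝒯.tens_sSup, iSup_range]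

lemma tens_iSup_left {ι : Sort*} (v : ι → V) (u : V) :
    𝒯.tens (⨆ i, v i) u = ⨆ i, 𝒯.tens (v i) u := by
  rw [𝒯.tens_comm, 𝒯.tens_iSup]
  exact iSup_congr fun i => 𝒯.tens_comm _ _

lemma unit_le_xi {X : Type u} {φ : X → V} (h : ∀ x, 𝒯.unit ≤ φ x) (𝔵 : T X) :
    𝒯.unit ≤ 𝒯.xi (𝒯.map φ 𝔵) := by
  rw [← 𝒯.xi_unit 𝔵]
  exact 𝒯.xi_mono _ _ h 𝔵

lemma le_Txi {X Y : Type u} (r : X → Y → V) {𝔵 : T X} {𝔶 : T Y}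
    (𝔴 : T (X × Y)) (h1 : 𝒯.map Prod.fst 𝔴 = 𝔵) (h2 : 𝒯.map Prod.snd 𝔴 = 𝔶) :
    𝒯.xi (𝒯.map (fun p => r p.1 p.2) 𝔴) ≤ 𝒯.Txi r 𝔵 𝔶 :=
  le_iSup_of_le ⟨𝔴, h1, h2⟩ le_rfl

lemma le_kleisli {X Y Z : Type u} (β : T Y → Z → V) (α : T X → Y → V) {𝔵 : T X} {z : Z}
    (𝔛 : T (T X)) (hm : 𝒯.m 𝔛 = 𝔵) (𝔶 : T Y) :
    𝒯.tens (𝒯.Txi α 𝔛 𝔶) (β 𝔶 z) ≤ 𝒯.kleisli β α 𝔵 z := by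
  subst hm
  exact le_iSup_of_le ⟨𝔛, rfl⟩ (le_iSup_of_le 𝔶 le_rfl)

/-- If `k ≤ c(e z, w)` then `c(𝔴, z) ≤ c(𝔴, w)`. -/
lemma comp_step {W : Type u} (c : 𝒯.TCatStr W) {z w : W}
    (h : 𝒯.unit ≤ c.rel (𝒯.e z) w) (𝔴 : T W) : c.rel 𝔴 z ≤ c.rel 𝔴 w := by
  refine le_trans ?_ (c.comp 𝔴 w)
  refine le_trans ?_ (𝒯.le_kleisli c.rel c.rel (𝒯.e 𝔴) (𝒯.m_e 𝔴) (𝒯.e z))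
  have hT : c.rel 𝔴 z ≤ 𝒯.Txi c.rel (𝒯.e 𝔴) (𝒯.e z) := by
    refine le_trans ?_ (𝒯.le_Txi c.rel (𝒯.e (𝔴, z)) (𝒯.e_nat _ _) (𝒯.e_nat _ _))
    rw [𝒯.e_nat, 𝒯.xi_e]
  calc c.rel 𝔴 z = 𝒯.tens (c.rel 𝔴 z) 𝒯.unit := by rw [𝒯.tens_comm, 𝒯.unit_tens]
    _ ≤ 𝒯.tens (𝒯.Txi c.rel (𝒯.e 𝔴) (𝒯.e z)) (c.rel (𝒯.e z) w) :=
        le_trans (𝒯.tens_mono_right h) (𝒯.tens_mono_left hT)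

/-- If `k ≤ c(e (g₀ x), h₀ x)` pointwise, then `(h₀)_* ≤ (g₀)_*`. -/
lemma star_lower {W X0 : Type u} (c : 𝒯.TCatStr W) (g0 h0 : X0 → W)
    (h : ∀ x, 𝒯.unit ≤ c.rel (𝒯.e (g0 x)) (h0 x)) (𝔵 : T X0) (w : W) :
    c.rel (𝒯.map h0 𝔵) w ≤ c.rel (𝒯.map g0 𝔵) w := by
  refine le_trans ?_ (c.comp (𝒯.map g0 𝔵) w)
  have hm : 𝒯.m (𝒯.map (fun x => 𝒯.e (g0 x)) 𝔵) = 𝒯.map g0 𝔵 := by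
    rw [show (fun x => 𝒯.e (g0 x)) = (𝒯.e ∘ g0) from rfl, 𝒯.map_comp, 𝒯.m_map_e]
  refine le_trans ?_ (𝒯.le_kleisli c.rel c.rel _ hm (𝒯.map h0 𝔵))
  have hT : 𝒯.unit ≤ 𝒯.Txi c.rel (𝒯.map (fun x => 𝒯.e (g0 x)) 𝔵) (𝒯.map h0 𝔵) := by
    refine le_trans ?_ (𝒯.le_Txi c.rel (𝒯.map (fun x => (𝒯.e (g0 x), h0 x)) 𝔵) ?_ ?_)
    · rw [𝒯.map_map]
      exact 𝒯.unit_le_xi (fun x => h x) 𝔵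
    · rw [𝒯.map_map]
    · rw [𝒯.map_map]
  calc c.rel (𝒯.map h0 𝔵) w = 𝒯.tens 𝒯.unit (c.rel (𝒯.map h0 𝔵) w) := (𝒯.unit_tens _).symm
    _ ≤ _ := 𝒯.tens_mono_left hT

lemma costar_of_star {W X0 : Type u} (c : 𝒯.TCatStr W) (g0 h0 : X0 → W)
    (h : ∀ (𝔵 : T X0) (w : W), c.rel (𝒯.map h0 𝔵) w ≤ c.rel (𝒯.map g0 𝔵) w)
    (𝔶 : T W) (x : X0) : c.rel 𝔶 (g0 x) ≤ c.rel 𝔶 (h0 x) := by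
  refine 𝒯.comp_step c ?_ 𝔶
  have h1 := h (𝒯.e x) (h0 x)
  rw [𝒯.e_nat, 𝒯.e_nat] at h1
  exact le_trans (c.le_refl (h0 x)) h1

lemma star_of_costar {W X0 : Type u} (c : 𝒯.TCatStr W) (g0 h0 : X0 → W)
    (h : ∀ (𝔶 : T W) (x : X0), c.rel 𝔶 (g0 x) ≤ c.rel 𝔶 (h0 x)) (𝔵 : T X0) (w : W) :
    c.rel (𝒯.map h0 𝔵) w ≤ c.rel (𝒯.map g0 𝔵) w :=
  𝒯.star_lower c g0 h0 (fun x => le_trans (c.le_refl (g0 x)) (h (𝒯.e (g0 x)) x)) 𝔵 w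

/-- For an adjunction `g ⊣ d` of `𝒯`-functors, `g_* = d^*`. -/
lemma adj_module {A B : Type u} {c : 𝒯.TCatStr A} {d0 : 𝒯.TCatStr B}
    {g : A → B} {d : B → A} (hg : IsTFunctor c d0 g) (hd : IsTFunctor d0 c d)
    (hadj : IsAdjunction c d0 g d) (𝔭 : T A) (y0 : B) :
    d0.rel (𝒯.map g 𝔭) y0 = c.rel 𝔭 (d y0) := by
  apply le_antisymm
  · refine le_trans (hd (𝒯.map g 𝔭) y0) ?_
    rw [𝒯.map_map d g 𝔭]
    have h1 := 𝒯.star_of_costar c id (fun x => d (g x)) (fun 𝔶 x => hadj.1 𝔶 x) 𝔭 (d y0)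
    rwa [𝒯.map_id] at h1
  · exact le_trans (hg 𝔭 (d y0)) (hadj.2 _ _)

/-- The Yoneda lemma: `X̂(T y 𝔵, ψ) = ψ(𝔵)`. -/
lemma yoneda {X : Type u} (a : 𝒯.TCatStr X) (hs : 𝒯.TCatStr (Hat a))
    (hhs : IsHatStr a hs) (y : X → Hat a) (hy : IsYoneda a y)
    (ψ : Hat a) (𝔵 : T X) : hs.rel (𝒯.map y 𝔵) ψ = ψ.1 𝔵 := by
  rw [hhs]
  unfold TopTheory.powRel
  apply le_antisymm
  · have hq : 𝒯.map Prod.snd (𝒯.map (fun x' => (𝒯.e x', (y x').1)) 𝔵)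
        = 𝒯.map Subtype.val (𝒯.map y 𝔵) := by
      rw [𝒯.map_map]
      exact (𝒯.map_map (fun ψ : Hat a => ψ.1) y 𝔵).symm
    refine le_trans (iInf_le _ ⟨𝒯.map (fun x' => (𝒯.e x', (y x').1)) 𝔵, hq⟩) ?_
    have hval : 𝒯.map (fun p : T X × (T X → V) => p.2 p.1)
        (𝒯.map (fun x' => (𝒯.e x', (y x').1)) 𝔵)
        = 𝒯.map (fun x' => a.rel (𝒯.e x') x') 𝔵 := by
      rw [𝒯.map_map]
      exact 𝒯.map_congr (fun x' => hy x' (𝒯.e x')) 𝔵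
    have hfst : 𝒯.m (𝒯.map Prod.fst (𝒯.map (fun x' => (𝒯.e x', (y x').1)) 𝔵)) = 𝔵 := by
      rw [𝒯.map_map]
      exact 𝒯.m_map_e 𝔵
    rw [hval, hfst]
    refine le_trans (𝒯.ihom_anti (𝒯.unit_le_xi (fun x' => a.le_refl x') 𝔵)) ?_
    rw [𝒯.ihom_unit]
  · refine le_iInf ?_
    rintro ⟨𝔮, h𝔮⟩
    rw [𝒯.le_ihom_iff]
    have h𝔮' : 𝒯.map Prod.snd 𝔮 = 𝒯.map (fun x => (y x).1) 𝔵 := by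
      rw [h𝔮]
      exact 𝒯.map_map _ _ _
    obtain ⟨𝔴₀, hw1, hw2⟩ := 𝒯.map_bc Prod.snd (fun x => (y x).1) 𝔮 𝔵 h𝔮'
    refine le_trans ?_ (ψ.2.1 (𝒯.m (𝒯.map Prod.fst 𝔮)) PUnit.unit)
    refine le_trans ?_
      (𝒯.le_kleisli (fun (𝔵' : T X) (_ : PUnit.{u + 1}) => ψ.1 𝔵') a.rel
        (𝒯.map Prod.fst 𝔮) rfl 𝔵)
    refine 𝒯.tens_mono_left ?_
    have h1 : 𝒯.map Prod.fst (𝒯.map (fun s => (s.1.1.1, s.1.2)) 𝔴₀) = 𝒯.map Prod.fst 𝔮 := by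
      rw [𝒯.map_map, ← hw1, 𝒯.map_map]
    have h2 : 𝒯.map Prod.snd (𝒯.map (fun s => (s.1.1.1, s.1.2)) 𝔴₀) = 𝔵 := by
      rw [𝒯.map_map, ← hw2]
    have h3 : 𝒯.map (fun q : T X × X => a.rel q.1 q.2)
        (𝒯.map (fun s => (s.1.1.1, s.1.2)) 𝔴₀)
        = 𝒯.map (fun p : T X × (T X → V) => p.2 p.1) 𝔮 := by
      rw [𝒯.map_map, ← hw1, 𝒯.map_map]
      exact 𝒯.map_congr (fun s => by rw [← hy, s.2]) 𝔴₀
    rw [← h3]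
    exact 𝒯.le_Txi a.rel _ h1 h2

lemma hs_le_ihom {X : Type u} (a : 𝒯.TCatStr X) (hs : 𝒯.TCatStr (Hat a))
    (hhs : IsHatStr a hs) (ψ : Hat a) (𝔭 : T (Hat a)) (𝔴 : T (T X × Hat a))
    (hws : 𝒯.map Prod.snd 𝔴 = 𝔭) :
    hs.rel 𝔭 ψ ≤ 𝒯.ihom (𝒯.xi (𝒯.map (fun q : T X × Hat a => q.2.1 q.1) 𝔴))
      (ψ.1 (𝒯.m (𝒯.map Prod.fst 𝔴))) := by
  rw [hhs]
  unfold TopTheory.powRel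
  have hq : 𝒯.map Prod.snd (𝒯.map (fun q : T X × Hat a => (q.1, q.2.1)) 𝔴)
      = 𝒯.map Subtype.val 𝔭 := by
    rw [𝒯.map_map, ← hws]
    exact (𝒯.map_map (fun ψ : Hat a => ψ.1) Prod.snd 𝔴).symm
  refine le_trans (iInf_le _ ⟨_, hq⟩) ?_
  have h1 : 𝒯.map (fun p : T X × (T X → V) => p.2 p.1)
      (𝒯.map (fun q : T X × Hat a => (q.1, q.2.1)) 𝔴)
      = 𝒯.map (fun q : T X × Hat a => q.2.1 q.1) 𝔴 := by
    rw [𝒯.map_map]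
  have h2 : 𝒯.map Prod.fst (𝒯.map (fun q : T X × Hat a => (q.1, q.2.1)) 𝔴)
      = 𝒯.map Prod.fst 𝔴 := by
    rw [𝒯.map_map]
  rw [h1, h2]

/-- The evaluation `𝒯`-relation `ε : X ⇸ X̂` is a `𝒯`-module. -/
lemma eps_mod {X : Type u} (a : 𝒯.TCatStr X) (hs : 𝒯.TCatStr (Hat a))
    (hhs : IsHatStr a hs) :
    𝒯.IsTModRel a.rel hs.rel (fun (𝔵 : T X) (ψ : Hat a) => ψ.1 𝔵) := by
  constructor
  · intro 𝔵 ψ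
    exact ψ.2.1 𝔵 PUnit.unit
  · intro 𝔵 ψ
    refine iSup_le ?_
    rintro ⟨𝔛, h𝔛⟩
    refine iSup_le fun 𝔭 => ?_
    unfold TopTheory.Txi
    rw [𝒯.tens_iSup_left]
    refine iSup_le ?_
    rintro ⟨𝔴, hwf, hws⟩
    refine le_trans (𝒯.tens_mono_right (𝒯.hs_le_ihom a hs hhs ψ 𝔭 𝔴 hws)) ?_
    have h4 : ψ.1 (𝒯.m (𝒯.map Prod.fst 𝔴)) = ψ.1 𝔵 := by
      rw [hwf]
      exact congrArg ψ.1 h𝔛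
    rw [h4]
    exact 𝒯.tens_ihom_le

/-- `f_* ⟜ ε = ⟨f_*⟩^*` : the extension of `f_*` along the evaluation module
agrees with the `X̂`-structure applied to `⟨f_*⟩`. -/
lemma extend_eq {X Y0 : Type u} (a : 𝒯.TCatStr X) (hs : 𝒯.TCatStr (Hat a))
    (hhs : IsHatStr a hs) (b : 𝒯.TCatStr Y0) (f : X → Y0)
    (mf : Y0 → Hat a) (hmf : ∀ (y0 : Y0) (𝔵 : T X), (mf y0).1 𝔵 = b.rel (𝒯.map f 𝔵) y0)
    (𝔭 : T (Hat a)) (y0 : Y0) :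
    𝒯.extend (modStar b f) (fun (𝔵 : T X) (ψ : Hat a) => ψ.1 𝔵) 𝔭 y0
      = hs.rel 𝔭 (mf y0) := by
  unfold TopTheory.extend
  apply le_antisymm
  · rw [hhs]
    unfold TopTheory.powRel
    refine le_iInf ?_
    rintro ⟨𝔮, h𝔮⟩
    obtain ⟨𝔴₀, hw1, hw2⟩ := 𝒯.map_bc Prod.snd Subtype.val 𝔮 𝔭 h𝔮
    refine le_trans (iInf_le _ (𝒯.m (𝒯.map Prod.fst 𝔮))) ?_
    rw [hmf]
    refine 𝒯.ihom_anti ?_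
    refine le_trans ?_ (le_iSup_of_le ⟨𝒯.map Prod.fst 𝔮, rfl⟩ le_rfl)
    have h1 : 𝒯.map Prod.fst (𝒯.map (fun s => (s.1.1.1, s.1.2)) 𝔴₀)
        = 𝒯.map Prod.fst 𝔮 := by
      rw [𝒯.map_map, ← hw1, 𝒯.map_map]
    have h2 : 𝒯.map Prod.snd (𝒯.map (fun s => (s.1.1.1, s.1.2)) 𝔴₀) = 𝔭 := by
      rw [𝒯.map_map, ← hw2]
    have h3 : 𝒯.map (fun p : T X × Hat a => p.2.1 p.1)
        (𝒯.map (fun s => (s.1.1.1, s.1.2)) 𝔴₀)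
        = 𝒯.map (fun p : T X × (T X → V) => p.2 p.1) 𝔮 := by
      rw [𝒯.map_map, ← hw1, 𝒯.map_map]
      exact 𝒯.map_congr (fun s => by rw [s.2]) 𝔴₀
    refine le_trans (le_of_eq (congrArg 𝒯.xi h3.symm)) ?_
    exact 𝒯.le_Txi (fun (𝔵' : T X) (ψ' : Hat a) => ψ'.1 𝔵') _ h1 h2
  · refine le_iInf fun 𝔵 => ?_
    rw [𝒯.le_ihom_iff, 𝒯.tens_iSup_left]
    refine iSup_le ?_
    rintro ⟨𝔛, h𝔛⟩
    unfold TopTheory.Txi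
    rw [𝒯.tens_iSup_left]
    refine iSup_le ?_
    rintro ⟨𝔴, hwf, hws⟩
    refine le_trans (𝒯.tens_mono_right (𝒯.hs_le_ihom a hs hhs (mf y0) 𝔭 𝔴 hws)) ?_
    have h4 : (mf y0).1 (𝒯.m (𝒯.map Prod.fst 𝔴)) = b.rel (𝒯.map f 𝔵) y0 := by
      rw [hwf]
      exact (congrArg (mf y0).1 h𝔛).trans (hmf y0 𝔵)
    rw [h4]
    exact 𝒯.tens_ihom_le

lemma powRel_mono {X : Type u} {𝔭 : T (T X → V)} {ψ ψ' : T X → V}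
    (h : ∀ 𝔵, ψ 𝔵 ≤ ψ' 𝔵) : 𝒯.powRel X 𝔭 ψ ≤ 𝒯.powRel X 𝔭 ψ' :=
  iInf_mono fun 𝔮 => 𝒯.ihom_mono (h _)

end Helpers

/-- Theorem 3.1, Kan extension. Let `Y` be a cocomplete
`𝒯`-category. Composition with `y_X : X → X̂` defines an equivalence of ordered sets
from left adjoint `𝒯`-functors `X̂ → Y` to `𝒯`-functors `X → Y`: every `𝒯`-functor
`f : X → Y` has a left adjoint extension `f_L : X̂ → Y` with `f_L · y_X ≅ f`, whose
right adjoint is `⟨f_*⟩ : Y → X̂`; `f_L` is unique up to equivalence, and `f ≤ f'`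
implies `f_L ≤ f'_L`. -/
theorem statement4 (𝒯 : TopTheory V T) {X Y : Type u}
    (a : 𝒯.TCatStr X) (b : 𝒯.TCatStr Y)
    (hs : 𝒯.TCatStr (Hat a)) (hhs : IsHatStr a hs)
    (y : X → Hat a) (hy : IsYoneda a y) (hyf : IsTFunctor a hs y)
    (hb : Cocomplete b)
    (f : X → Y) (hf : IsTFunctor a b f)
    (mf : Y → Hat a) (hmf : ∀ (y0 : Y) (𝔵 : T X), (mf y0).1 𝔵 = b.rel (𝒯.map f 𝔵) y0) :
    (∃ fL : Hat a → Y, IsTFunctor hs b fL ∧ IsTFunctor b hs mf ∧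
        IsAdjunction hs b fL mf ∧ FunEquiv b (fL ∘ y) f) ∧
    (∀ g g' : Hat a → Y, IsLeftAdjoint hs b g → FunEquiv b (g ∘ y) f →
        IsLeftAdjoint hs b g' → FunEquiv b (g' ∘ y) f → FunEquiv b g g') ∧
    (∀ (f' : X → Y) (fL fL' : Hat a → Y), IsTFunctor a b f' → funLE b f f' →
        IsLeftAdjoint hs b fL → FunEquiv b (fL ∘ y) f →
        IsLeftAdjoint hs b fL' → FunEquiv b (fL' ∘ y) f' → funLE b fL fL') := by
  have hmod : 𝒯.IsTModRel a.rel hs.rel (fun (𝔵 : T X) (ψ : Hat a) => ψ.1 𝔵) :=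
    𝒯.eps_mod a hs hhs
  obtain ⟨fL, hfL, hcolim⟩ :=
    hb X (Hat a) a hs f hf (fun (𝔵 : T X) (ψ : Hat a) => ψ.1 𝔵) hmod
  have hstar : ∀ (𝔭 : T (Hat a)) (y1 : Y), b.rel (𝒯.map fL 𝔭) y1 = hs.rel 𝔭 (mf y1) :=
    fun 𝔭 y1 => (hcolim 𝔭 y1).trans (𝒯.extend_eq a hs hhs b f mf hmf 𝔭 y1)
  have hunit1 : ∀ ψ : Hat a, 𝒯.unit ≤ hs.rel (𝒯.e ψ) (mf (fL ψ)) := by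
    intro ψ
    have h := hstar (𝒯.e ψ) (fL ψ)
    rw [𝒯.e_nat] at h
    rw [← h]
    exact b.le_refl (fL ψ)
  have hcounit1 : ∀ y1 : Y, 𝒯.unit ≤ b.rel (𝒯.e (fL (mf y1))) y1 := by
    intro y1
    have h := hstar (𝒯.e (mf y1)) y1
    rw [𝒯.e_nat] at h
    rw [h]
    exact hs.le_refl (mf y1)
  have hmfT : IsTFunctor b hs mf := by
    intro 𝔶 y1
    rw [← hstar (𝒯.map mf 𝔶) y1, 𝒯.map_map fL mf 𝔶]
    have h := 𝒯.star_lower b (fun y' => fL (mf y')) id hcounit1 𝔶 y1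
    rwa [𝒯.map_id] at h
  have hadj : IsAdjunction hs b fL mf := by
    constructor
    · intro 𝔭 ψ
      exact 𝒯.comp_step hs (hunit1 ψ) 𝔭
    · intro 𝔶 y1
      exact 𝒯.comp_step b (hcounit1 y1) 𝔶
  have key : ∀ (g : Hat a → Y) (dg : Y → Hat a), IsTFunctor hs b g → IsTFunctor b hs dg →
      IsAdjunction hs b g dg → ∀ (f0 : X → Y), FunEquiv b (g ∘ y) f0 →
      ∀ (y1 : Y) (𝔵 : T X), (dg y1).1 𝔵 = b.rel (𝒯.map f0 𝔵) y1 := by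
    intro g dg hgT hdgT hgadj f0 hgy y1 𝔵
    rw [← 𝒯.yoneda a hs hhs y hy (dg y1) 𝔵, ← 𝒯.adj_module hgT hdgT hgadj (𝒯.map y 𝔵) y1,
      ← 𝒯.map_comp g y 𝔵]
    exact le_antisymm (𝒯.star_of_costar b f0 (g ∘ y) (fun 𝔶 x => (hgy 𝔶 x).ge) 𝔵 y1)
      (𝒯.star_of_costar b (g ∘ y) f0 (fun 𝔶 x => (hgy 𝔶 x).le) 𝔵 y1)
  refine ⟨⟨fL, hfL, hmfT, hadj, ?_⟩, ?_, ?_⟩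
  · -- fL ∘ y ≅ f
    have hstar_fy : ∀ (𝔵 : T X) (y1 : Y),
        b.rel (𝒯.map (fL ∘ y) 𝔵) y1 = b.rel (𝒯.map f 𝔵) y1 := by
      intro 𝔵 y1
      rw [𝒯.map_comp fL y 𝔵, hstar (𝒯.map y 𝔵) y1, 𝒯.yoneda a hs hhs y hy (mf y1) 𝔵, hmf]
    intro 𝔶 x
    exact le_antisymm (𝒯.costar_of_star b (fL ∘ y) f (fun 𝔵 w => (hstar_fy 𝔵 w).ge) 𝔶 x)
      (𝒯.costar_of_star b f (fL ∘ y) (fun 𝔵 w => (hstar_fy 𝔵 w).le) 𝔶 x)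
  · -- uniqueness
    rintro g g' ⟨hgT, dg, hdgT, hgadj⟩ hgy ⟨hg'T, dg', hdg'T, hg'adj⟩ hg'y
    have hd : ∀ y1, dg y1 = dg' y1 := by
      intro y1
      apply Subtype.ext
      funext 𝔵
      rw [show (dg y1).val 𝔵 = (dg y1).1 𝔵 from rfl,
        key g dg hgT hdgT hgadj f hgy y1 𝔵, ← key g' dg' hg'T hdg'T hg'adj f hg'y y1 𝔵]
    have hstar_gg' : ∀ (𝔭 : T (Hat a)) (y1 : Y),
        b.rel (𝒯.map g 𝔭) y1 = b.rel (𝒯.map g' 𝔭) y1 := by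
      intro 𝔭 y1
      rw [𝒯.adj_module hgT hdgT hgadj, 𝒯.adj_module hg'T hdg'T hg'adj, hd]
    intro 𝔶 ψ
    exact le_antisymm (𝒯.costar_of_star b g g' (fun 𝔵 w => (hstar_gg' 𝔵 w).ge) 𝔶 ψ)
      (𝒯.costar_of_star b g' g (fun 𝔵 w => (hstar_gg' 𝔵 w).le) 𝔶 ψ)
  · -- monotonicity
    rintro f' fL1 fL2 hf'T hle ⟨hT1, d1, hd1T, hadj1⟩ heq1 ⟨hT2, d2, hd2T, hadj2⟩ heq2
    have hstarc : ∀ (𝔭 : T (Hat a)) (y1 : Y),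
        b.rel (𝒯.map fL2 𝔭) y1 ≤ b.rel (𝒯.map fL1 𝔭) y1 := by
      intro 𝔭 y1
      rw [𝒯.adj_module hT1 hd1T hadj1, 𝒯.adj_module hT2 hd2T hadj2]
      calc hs.rel 𝔭 (d2 y1) = 𝒯.powRel X (𝒯.map Subtype.val 𝔭) (d2 y1).1 := hhs _ _
        _ ≤ 𝒯.powRel X (𝒯.map Subtype.val 𝔭) (d1 y1).1 := 𝒯.powRel_mono (fun 𝔵 => by
            rw [show (d2 y1).val 𝔵 = (d2 y1).1 𝔵 from rfl,
              show (d1 y1).val 𝔵 = (d1 y1).1 𝔵 from rfl,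
              key fL1 d1 hT1 hd1T hadj1 f heq1 y1 𝔵,
              key fL2 d2 hT2 hd2T hadj2 f' heq2 y1 𝔵]
            exact 𝒯.star_of_costar b f f' hle 𝔵 y1)
        _ = hs.rel 𝔭 (d1 y1) := (hhs _ _).symm
    intro 𝔶 ψ
    exact 𝒯.costar_of_star b fL1 fL2 hstarc 𝔶 ψ

end TopTheory

end Paper
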